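/- Let k*_0 = k_0, k*_{t+1} = g(k*_t, 0), let k* := lim_{t→∞} k*_t ∈ [0,∞) (this limit exists), and let R* := f'(k*) (with R* := ∞ when k* = 0). If either ∑_{t=1}^∞ d_t = ∞ or R* > G, then there exists exactly one equilibrium, and it is bubbleless. -/

import Mathlib

open Filter Topology Set

noncomputable section

/-- Standing assumptions on the production function `f` with derivative `f'` and
second derivative `f''`: `f : (0,∞) → (0,∞)` is twice continuously differentiable,
`f' > 0`, `f'' < 0`, `f'(k) → ∞` as `k → 0+`, and `lim_{k→∞} f'(k) < G`. -/
def ProdAssump (G : ℝ) (f f' f'' : ℝ → ℝ) : Prop :=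
  0 < G ∧
  (∀ k > (0:ℝ), 0 < f k) ∧
  (∀ k > (0:ℝ), HasDerivAt f (f' k) k) ∧
  (∀ k > (0:ℝ), HasDerivAt f' (f'' k) k) ∧
  ContinuousOn f'' (Ioi 0) ∧
  (∀ k > (0:ℝ), 0 < f' k) ∧
  (∀ k > (0:ℝ), f'' k < 0) ∧
  Tendsto f' (nhdsWithin 0 (Ioi 0)) atTop ∧
  (∃ L < G, Tendsto f' atTop (nhds L))

/-- Standing assumptions on the savings function: continuous, `0 < s(w,R) < w`,
strictly increasing in `w`, nondecreasing in `R`. -/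
def SavAssump (s : ℝ → ℝ → ℝ) : Prop :=
  ContinuousOn (fun wR : ℝ × ℝ => s wR.1 wR.2) (Ioi 0 ×ˢ Ioi 0) ∧
  (∀ w > (0:ℝ), ∀ R > (0:ℝ), 0 < s w R ∧ s w R < w) ∧
  (∀ R > (0:ℝ), StrictMonoOn (fun w => s w R) (Ioi 0)) ∧
  (∀ w > (0:ℝ), MonotoneOn (fun R => s w R) (Ioi 0))

/-- The savings function arises from a continuous, quasi-concave, strictly increasing
utility `U` on `(0,∞)²`: `s w R` is the unique maximizer of `σ ↦ U (w - σ) (R σ)`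
over `(0, w)`. -/
def SavFromUtility (s : ℝ → ℝ → ℝ) : Prop :=
  ∃ U : ℝ → ℝ → ℝ,
    ContinuousOn (fun c : ℝ × ℝ => U c.1 c.2) (Ioi 0 ×ˢ Ioi 0) ∧
    QuasiconcaveOn ℝ (Ioi 0 ×ˢ Ioi 0) (fun c : ℝ × ℝ => U c.1 c.2) ∧
    (∀ c c' : ℝ × ℝ, c ∈ Ioi (0:ℝ) ×ˢ Ioi (0:ℝ) → c' ∈ Ioi (0:ℝ) ×ˢ Ioi (0:ℝ) →
      c.1 ≤ c'.1 → c.2 ≤ c'.2 → c ≠ c' → U c.1 c.2 < U c'.1 c'.2) ∧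
    (∀ w > (0:ℝ), ∀ R > (0:ℝ), s w R ∈ Ioo 0 w ∧
      ∀ σ ∈ Ioo (0:ℝ) w, σ ≠ s w R → U (w - σ) (R * σ) < U (w - s w R) (R * s w R))

/-- An equilibrium: sequences `k, p` with `k t > 0`, `p t ≥ 0`, `k 0 = k₀`,
the capital accumulation equation and the no-arbitrage price equation. -/
def IsEquilibrium (G : ℝ) (f f' : ℝ → ℝ) (s : ℝ → ℝ → ℝ) (k0 : ℝ) (d : ℕ → ℝ)
    (k p : ℕ → ℝ) : Prop :=
  (∀ t, 0 < k t) ∧ (∀ t, 0 ≤ p t) ∧ k 0 = k0 ∧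
  (∀ t, G * k (t + 1) + p t = s (f (k t) - k t * f' (k t)) (f' (k (t + 1)))) ∧
  (∀ t, p (t + 1) = f' (k (t + 1)) / G * p t - d (t + 1))

/-- Arrow–Debreu date-0 price `q_t = 1/(R_1 ⋯ R_t)` where `R_t = f'(k_t)`. -/
def qseq (f' : ℝ → ℝ) (k : ℕ → ℝ) (t : ℕ) : ℝ :=
  (∏ i ∈ Finset.range t, f' (k (i + 1)))⁻¹

/-- Undetrended dividend `D_t = G^t d_t`. -/
def Dseq (G : ℝ) (d : ℕ → ℝ) (t : ℕ) : ℝ := G ^ t * d t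

/-- Detrended fundamental value `v_t = G^{-t} q_t^{-1} ∑_{s>t} q_s D_s`. -/
def fundval (G : ℝ) (f' : ℝ → ℝ) (k : ℕ → ℝ) (d : ℕ → ℝ) (t : ℕ) : ℝ :=
  (G ^ t)⁻¹ * (qseq f' k t)⁻¹ * ∑' n : ℕ, qseq f' k (t + 1 + n) * Dseq G d (t + 1 + n)

/-- Detrended bubble component `b_t = p_t - v_t`. -/
def bubble (G : ℝ) (f' : ℝ → ℝ) (k p : ℕ → ℝ) (d : ℕ → ℝ) (t : ℕ) : ℝ :=
  p t - fundval G f' k d t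

/-- An equilibrium is bubbleless if `b_t = 0` for all `t`. -/
def Bubbleless (G : ℝ) (f' : ℝ → ℝ) (k p : ℕ → ℝ) (d : ℕ → ℝ) : Prop :=
  ∀ t, bubble G f' k p d t = 0

/-- An equilibrium is asymptotically bubbly if `liminf_{t→∞} b_t > 0`. -/
def AsympBubbly (G : ℝ) (f' : ℝ → ℝ) (k p : ℕ → ℝ) (d : ℕ → ℝ) : Prop :=
  0 < atTop.liminf (bubble G f' k p d)

/-- Long-run dividend growth rate `G_d = limsup_{t→∞} D_t^{1/t}` (as an extended real). -/
def GdGrowth (G : ℝ) (d : ℕ → ℝ) : EReal :=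
  atTop.limsup (fun t : ℕ => ((Dseq G d t ^ ((t : ℝ)⁻¹) : ℝ) : EReal))

/-- `x` solves the equation `G x + p = s(f(k) - k f'(k), f'(x))` with `x > 0`;
when the solution exists it is unique and denoted `g(k,p)`. -/
def IsGsol (G : ℝ) (f f' : ℝ → ℝ) (s : ℝ → ℝ → ℝ) (k p x : ℝ) : Prop :=
  0 < x ∧ G * x + p = s (f k - k * f' k) (f' x)

/-- Set of positive steady states: `𝒦 = {k > 0 : g(k,0) = k}`. -/
def Ksteady (G : ℝ) (f f' : ℝ → ℝ) (s : ℝ → ℝ → ℝ) : Set ℝ :=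
  {k : ℝ | 0 < k ∧ IsGsol G f f' s k 0 k}

/-- The equilibrium set `𝒫₀` of initial prices. -/
def P0set (G : ℝ) (f f' : ℝ → ℝ) (s : ℝ → ℝ → ℝ) (k0 : ℝ) (d : ℕ → ℝ) : Set ℝ :=
  {p0 : ℝ | ∃ k p : ℕ → ℝ, IsEquilibrium G f f' s k0 d k p ∧ p 0 = p0}


section Auxiliary

variable {G : ℝ} {f f' f'' : ℝ → ℝ} {s : ℝ → ℝ → ℝ}

def wfun (f f' : ℝ → ℝ) (k : ℝ) : ℝ := f k - k * f' k

lemma f'_contAt (hf : ProdAssump G f f' f'') {k : ℝ} (hk : (0:ℝ) < k) :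
    ContinuousAt f' k := (hf.2.2.2.1 k hk).continuousAt

lemma f_contAt (hf : ProdAssump G f f' f'') {k : ℝ} (hk : (0:ℝ) < k) :
    ContinuousAt f k := (hf.2.2.1 k hk).continuousAt

lemma f'_anti (hf : ProdAssump G f f' f'') : StrictAntiOn f' (Ioi 0) := by
  apply strictAntiOn_of_deriv_neg (convex_Ioi 0)
    (fun k hk => (f'_contAt hf hk).continuousWithinAt)
  intro k hk
  rw [interior_Ioi] at hk
  rw [(hf.2.2.2.1 k hk).deriv]
  exact hf.2.2.2.2.2.2.1 k hk

lemma f_mono (hf : ProdAssump G f f' f'') : StrictMonoOn f (Ioi 0) := by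
  apply strictMonoOn_of_deriv_pos (convex_Ioi 0)
    (fun k hk => (f_contAt hf hk).continuousWithinAt)
  intro k hk
  rw [interior_Ioi] at hk
  rw [(hf.2.2.1 k hk).deriv]
  exact hf.2.2.2.2.2.1 k hk

lemma w_hasDeriv (hf : ProdAssump G f f' f'') {k : ℝ} (hk : (0:ℝ) < k) :
    HasDerivAt (wfun f f') (-(k * f'' k)) k := by
  have h := (hf.2.2.1 k hk).sub ((hasDerivAt_id k).mul (hf.2.2.2.1 k hk))
  refine h.congr_deriv ?_
  simp only [id_eq]; ring

lemma w_contAt (hf : ProdAssump G f f' f'') {k : ℝ} (hk : (0:ℝ) < k) :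
    ContinuousAt (wfun f f') k := (w_hasDeriv hf hk).continuousAt

lemma w_mono (hf : ProdAssump G f f' f'') : StrictMonoOn (wfun f f') (Ioi 0) := by
  apply strictMonoOn_of_deriv_pos (convex_Ioi 0)
    (fun k hk => (w_contAt hf hk).continuousWithinAt)
  intro k hk
  rw [interior_Ioi] at hk
  rw [(w_hasDeriv hf hk).deriv]
  have h1 := hf.2.2.2.2.2.2.1 k hk
  have hk' : (0:ℝ) < k := hk
  nlinarith [mul_pos hk' (neg_pos.mpr h1)]

/-- Mean value bound: for `0 < a < b`, `f b - f a > f' b * (b - a)`. -/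
lemma f_slope_gt (hf : ProdAssump G f f' f'') {a b : ℝ} (ha : 0 < a) (hab : a < b) :
    f' b * (b - a) < f b - f a := by
  obtain ⟨c, hc, hceq⟩ := exists_hasDerivAt_eq_slope f f' hab
    (fun x hx => (f_contAt hf (lt_of_lt_of_le ha hx.1)).continuousWithinAt)
    (fun x hx => hf.2.2.1 x (ha.trans hx.1))
  have hcb : f' b < f' c := f'_anti hf (ha.trans hc.1) (ha.trans (hc.1.trans hc.2)) hc.2
  have : f' c * (b - a) = f b - f a := by
    rw [hceq, div_mul_cancel₀ _ (sub_ne_zero.mpr hab.ne')]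
  nlinarith

lemma w_pos (hf : ProdAssump G f f' f'') {k : ℝ} (hk : (0:ℝ) < k) :
    0 < wfun f f' k := by
  -- first: nonstrict `f x ≥ x * f' x` for all x > 0
  have nonstrict : ∀ x > (0:ℝ), x * f' x ≤ f x := by
    intro x hx
    by_contra h
    push_neg at h
    have hfx : 0 < f' x := hf.2.2.2.2.2.1 x hx
    set δ := x * f' x - f x with hδ
    have hδpos : 0 < δ := by simp [hδ]; linarith
    set ε := min (x/2) (δ/(2 * f' x)) with hε
    have hεpos : 0 < ε := lt_min (by linarith) (by positivity)
    have hεx : ε < x := lt_of_le_of_lt (min_le_left _ _) (by linarith)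
    have h1 : f' x * (x - ε) < f x - f ε := f_slope_gt hf hεpos hεx
    have h2 : 0 < f ε := hf.2.1 ε hεpos
    have h3 : f' x * ε ≤ δ/2 := by
      have : ε ≤ δ/(2 * f' x) := min_le_right _ _
      rw [le_div_iff₀ (by positivity)] at this
      nlinarith
    nlinarith
  -- strict
  have h1 : f' k * (k - k/2) < f k - f (k/2) := f_slope_gt hf (by linarith) (by linarith)
  have h2 : (k/2) * f' (k/2) ≤ f (k/2) := nonstrict _ (by linarith)
  have h3 : f' k < f' (k/2) := f'_anti hf (by simp; linarith) (by exact hk) (by linarith)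
  have : k * f' k < f k := by nlinarith
  simp [wfun]; linarith


-- ### savings helpers

lemma s_pos (hs : SavAssump s) {w R : ℝ} (hw : 0 < w) (hR : 0 < R) : 0 < s w R :=
  (hs.2.1 w hw R hR).1

lemma s_lt_w (hs : SavAssump s) {w R : ℝ} (hw : 0 < w) (hR : 0 < R) : s w R < w :=
  (hs.2.1 w hw R hR).2

lemma s_mono_w (hs : SavAssump s) {w w' R : ℝ} (hw : 0 < w) (hw' : w ≤ w') (hR : 0 < R) :
    s w R ≤ s w' R := by
  rcases eq_or_lt_of_le hw' with h | h
  · rw [h]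
  · exact ((hs.2.2.1 R hR) hw (hw.trans h) h).le

lemma s_mono_R (hs : SavAssump s) {w R R' : ℝ} (hw : 0 < w) (hR : 0 < R) (hR' : R ≤ R') :
    s w R ≤ s w R' := hs.2.2.2 w hw hR (hR.trans_le hR') hR'

/-- Continuity of `(k, x) ↦ s (wfun k) (f' x)` at positive points. -/
lemma sw_contAt (hf : ProdAssump G f f' f'') (hs : SavAssump s) {k y : ℝ}
    (hk : 0 < k) (hy : 0 < y) :
    ContinuousAt (fun q : ℝ × ℝ => s (wfun f f' q.1) (f' q.2)) (k, y) := by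
  have h1 : ContinuousAt (fun wR : ℝ × ℝ => s wR.1 wR.2) (wfun f f' k, f' y) :=
    hs.1.continuousAt (((isOpen_Ioi.prod isOpen_Ioi)).mem_nhds
      (by exact ⟨w_pos hf hk, hf.2.2.2.2.2.1 y hy⟩))
  have h2 : ContinuousAt (fun q : ℝ × ℝ => ((wfun f f' q.1, f' q.2) : ℝ × ℝ)) (k, y) := by
    have h := ((w_contAt hf hk).comp (x := (k, y)) continuousAt_fst).prodMk ((f'_contAt hf hy).comp (x := (k, y)) continuousAt_snd)
    exact h
  exact Filter.Tendsto.comp h1 h2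

lemma sx_contOn (hf : ProdAssump G f f' f'') (hs : SavAssump s) {k : ℝ} (hk : 0 < k) :
    ContinuousOn (fun x : ℝ => s (f k - k * f' k) (f' x)) (Ioi 0) := by
  intro x hx
  have h2 : ContinuousAt (fun x : ℝ => ((k, x) : ℝ × ℝ)) x :=
    continuousAt_const.prodMk continuousAt_id
  have := Filter.Tendsto.comp (sw_contAt hf hs hk (mem_Ioi.mp hx)) h2
  exact (ContinuousAt.continuousWithinAt (by simpa [wfun, Function.comp_def, ContinuousAt] using this))

-- ### g-solution lemmas

lemma gsol_uniq (hf : ProdAssump G f f' f'') (hs : SavAssump s) {k p x y : ℝ}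
    (hk : 0 < k) (hx : IsGsol G f f' s k p x) (hy : IsGsol G f f' s k p y) : x = y := by
  have hG := hf.1
  have hw : 0 < wfun f f' k := w_pos hf hk
  have key : ∀ a b : ℝ, IsGsol G f f' s k p a → IsGsol G f f' s k p b → a < b → False := by
    intro a b ha hb hab
    have hfb : f' b < f' a := f'_anti hf ha.1 (ha.1.trans hab) hab
    have : s (f k - k * f' k) (f' b) ≤ s (f k - k * f' k) (f' a) := by
      have := s_mono_R hs (w := wfun f f' k) hw (hf.2.2.2.2.2.1 b hb.1) hfb.le
      simpa [wfun] using this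
    rw [← ha.2, ← hb.2] at this
    nlinarith
  rcases lt_trichotomy x y with h | h | h
  · exact absurd (key x y hx hy h) not_false
  · exact h
  · exact absurd (key y x hy hx h) not_false

/-- `p < wfun k` whenever a g-solution exists (with `p` arbitrary real, in fact
`G x + p = s < w`). -/
lemma gsol_p_lt (hf : ProdAssump G f f' f'') (hs : SavAssump s) {k p x : ℝ}
    (hk : 0 < k) (hx : IsGsol G f f' s k p x) : G * x + p < wfun f f' k := by
  have := s_lt_w hs (w_pos hf hk) (hf.2.2.2.2.2.1 x hx.1)
  rw [wfun] at *
  linarith [hx.2.le.trans_lt this]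

/-- Monotonicity: bigger capital / smaller price gives bigger solution. -/
lemma gsol_mono (hf : ProdAssump G f f' f'') (hs : SavAssump s) {k k' p p' x x' : ℝ}
    (hk : 0 < k) (hk' : 0 < k') (hkk : k ≤ k') (hpp : p' ≤ p)
    (hx : IsGsol G f f' s k p x) (hx' : IsGsol G f f' s k' p' x') : x ≤ x' := by
  have hG := hf.1
  by_contra hcon
  push_neg at hcon
  have hw : 0 < wfun f f' k := w_pos hf hk
  have hww : wfun f f' k ≤ wfun f f' k' := by
    rcases eq_or_lt_of_le hkk with h | h
    · rw [h]
    · exact (w_mono hf hk hk' h).le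
  have hf'x : f' x ≤ f' x' := (f'_anti hf hx'.1 hx.1 hcon).le
  have h1 : s (f k - k * f' k) (f' x) ≤ s (f k - k * f' k) (f' x') :=
    s_mono_R hs (by simpa [wfun] using hw) (hf.2.2.2.2.2.1 x hx.1) hf'x
  have h2 : s (f k - k * f' k) (f' x') ≤ s (f k' - k' * f' k') (f' x') := by
    have := s_mono_w hs (w := wfun f f' k) (w' := wfun f f' k') hw hww
      (hf.2.2.2.2.2.1 x' hx'.1)
    simpa [wfun] using this
  have := hx.2.le.trans (h1.trans (h2.trans_eq hx'.2.symm))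
  nlinarith

lemma gsol_mono_strict (hf : ProdAssump G f f' f'') (hs : SavAssump s) {k k' p p' x x' : ℝ}
    (hk : 0 < k) (hk' : 0 < k') (hkk : k ≤ k') (hpp : p' < p)
    (hx : IsGsol G f f' s k p x) (hx' : IsGsol G f f' s k' p' x') : x < x' := by
  have hG := hf.1
  rcases eq_or_lt_of_le (gsol_mono hf hs hk hk' hkk hpp.le hx hx') with h | h
  · exfalso
    have hw : 0 < wfun f f' k := w_pos hf hk
    have hww : wfun f f' k ≤ wfun f f' k' := by
      rcases eq_or_lt_of_le hkk with h2 | h2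
      · rw [h2]
      · exact (w_mono hf hk hk' h2).le
    have h2 : s (f k - k * f' k) (f' x) ≤ s (f k' - k' * f' k') (f' x') := by
      rw [← h]
      have := s_mono_w hs (w := wfun f f' k) (w' := wfun f f' k') hw hww
        (hf.2.2.2.2.2.1 x hx.1)
      simpa [wfun] using this
    rw [← hx.2, ← hx'.2, ← h] at h2
    nlinarith
  · exact h

/-- Existence of a g-solution given some slack point. -/
lemma gsol_exists_of_slack (hf : ProdAssump G f f' f'') (hs : SavAssump s) {k p x0 : ℝ}
    (hk : 0 < k) (hx0 : 0 < x0) (hslack : p < s (f k - k * f' k) (f' x0) - G * x0) :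
    ∃ x, IsGsol G f f' s k p x := by
  have hG := hf.1
  have hw : 0 < wfun f f' k := w_pos hf hk
  set h : ℝ → ℝ := fun x => s (f k - k * f' k) (f' x) - G * x with hh
  set X : ℝ := max x0 ((wfun f f' k - p) / G + 1) with hX
  have hx0X : x0 ≤ X := le_max_left _ _
  have hXpos : 0 < X := hx0.trans_le hx0X
  have hcont : ContinuousOn h (Icc x0 X) := by
    apply ContinuousOn.sub _ (continuousOn_const.mul continuousOn_id)
    exact (sx_contOn hf hs hk).mono (fun y hy => hx0.trans_le hy.1)
  have hhX : h X < p := by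
    have h1 : s (f k - k * f' k) (f' X) < wfun f f' k := by
      have := s_lt_w hs hw (hf.2.2.2.2.2.1 X hXpos)
      simpa [wfun] using this
    have h2 : (wfun f f' k - p) / G + 1 ≤ X := le_max_right _ _
    rw [div_add' _ _ _ hG.ne', div_le_iff₀ hG] at h2
    simp only [hh]
    nlinarith
  have hhx0 : p < h x0 := by simp only [hh]; linarith
  have := intermediate_value_Icc' hx0X hcont (by exact ⟨hhX.le, hhx0.le⟩ : p ∈ Icc (h X) (h x0))
  obtain ⟨x, hxmem, hxval⟩ := this
  exact ⟨x, hx0.trans_le hxmem.1, by simp only [hh] at hxval; linarith⟩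

/-- Existence of a g-solution for any `p ≤ 0`. -/
lemma gsol_exists_of_nonpos (hf : ProdAssump G f f' f'') (hs : SavAssump s) {k p : ℝ}
    (hk : 0 < k) (hp : p ≤ 0) : ∃ x, IsGsol G f f' s k p x := by
  have hG := hf.1
  have hw : 0 < wfun f f' k := w_pos hf hk
  set S1 : ℝ := s (f k - k * f' k) (f' 1) with hS1
  have hS1pos : 0 < S1 := by
    have := s_pos hs hw (hf.2.2.2.2.2.1 1 one_pos)
    simpa [hS1, wfun] using this
  set x0 : ℝ := min 1 (S1 / (2 * G)) with hx0
  have hx0pos : 0 < x0 := lt_min one_pos (by positivity)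
  apply gsol_exists_of_slack hf hs hk hx0pos
  have h1 : f' 1 ≤ f' x0 := by
    rcases eq_or_lt_of_le (min_le_left 1 (S1 / (2 * G))) with h | h
    · rw [← hx0] at h; rw [h]
    · exact (f'_anti hf (mem_Ioi.mpr hx0pos) (mem_Ioi.mpr one_pos) h).le
  have h2 : S1 ≤ s (f k - k * f' k) (f' x0) := by
    have := s_mono_R hs (w := wfun f f' k) hw (hf.2.2.2.2.2.1 1 one_pos) h1
    simpa [hS1, wfun] using this
  have h3 : G * x0 ≤ S1 / 2 := by
    have : x0 ≤ S1 / (2 * G) := min_le_right _ _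
    rw [le_div_iff₀ (by positivity)] at this
    nlinarith
  nlinarith

/-- Continuity-existence master lemma: near a point with a g-solution, g-solutions
exist and are close. -/
lemma gsol_cont (hf : ProdAssump G f f' f'') (hs : SavAssump s) {k₀ p₀ x₀ : ℝ}
    (hk : 0 < k₀) (hx : IsGsol G f f' s k₀ p₀ x₀) {ε : ℝ} (hε : 0 < ε) (hεx : ε < x₀) :
    ∃ δ > 0, ∀ k p : ℝ, |k - k₀| < δ → |p - p₀| < δ →
      ∃ x, IsGsol G f f' s k p x ∧ |x - x₀| ≤ ε := by
  have hG := hf.1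
  have hw : 0 < wfun f f' k₀ := w_pos hf hk
  have hal : 0 < x₀ - ε := by linarith
  have har : 0 < x₀ + ε := by linarith
  -- values at the two test points
  have keyl : p₀ + G * ε ≤ s (f k₀ - k₀ * f' k₀) (f' (x₀ - ε)) - G * (x₀ - ε) := by
    have h1 : f' x₀ ≤ f' (x₀ - ε) := (f'_anti hf (mem_Ioi.mpr hal) (mem_Ioi.mpr hx.1) (by linarith)).le
    have h2 : s (f k₀ - k₀ * f' k₀) (f' x₀) ≤ s (f k₀ - k₀ * f' k₀) (f' (x₀ - ε)) := by
      have := s_mono_R hs (w := wfun f f' k₀) hw (hf.2.2.2.2.2.1 x₀ hx.1) h1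
      simpa [wfun] using this
    rw [← hx.2] at h2
    linarith
  have keyr : s (f k₀ - k₀ * f' k₀) (f' (x₀ + ε)) - G * (x₀ + ε) ≤ p₀ - G * ε := by
    have h1 : f' (x₀ + ε) ≤ f' x₀ := (f'_anti hf (mem_Ioi.mpr hx.1) (mem_Ioi.mpr har) (by linarith)).le
    have h2 : s (f k₀ - k₀ * f' k₀) (f' (x₀ + ε)) ≤ s (f k₀ - k₀ * f' k₀) (f' x₀) := by
      have := s_mono_R hs (w := wfun f f' k₀) hw (hf.2.2.2.2.2.1 (x₀ + ε) har) h1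
      simpa [wfun] using this
    rw [← hx.2] at h2
    linarith
  -- continuity in k of the two test values
  have hcl : ContinuousAt (fun k : ℝ => s (f k - k * f' k) (f' (x₀ - ε))) k₀ := by
    have h2 : ContinuousAt (fun k : ℝ => ((k, x₀ - ε) : ℝ × ℝ)) k₀ :=
      continuousAt_id.prodMk continuousAt_const
    have := Filter.Tendsto.comp (sw_contAt hf hs hk hal) h2
    simpa [wfun, Function.comp_def, ContinuousAt] using this
  have hcr : ContinuousAt (fun k : ℝ => s (f k - k * f' k) (f' (x₀ + ε))) k₀ := by
    have h2 : ContinuousAt (fun k : ℝ => ((k, x₀ + ε) : ℝ × ℝ)) k₀ :=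
      continuousAt_id.prodMk continuousAt_const
    have := Filter.Tendsto.comp (sw_contAt hf hs hk har) h2
    simpa [wfun, Function.comp_def, ContinuousAt] using this
  have hgap : 0 < G * ε / 2 := by positivity
  obtain ⟨δ1, hδ1pos, hδ1⟩ := Metric.continuousAt_iff.mp hcl (G * ε / 2) hgap
  obtain ⟨δ2, hδ2pos, hδ2⟩ := Metric.continuousAt_iff.mp hcr (G * ε / 2) hgap
  refine ⟨min (min δ1 δ2) (min (k₀ / 2) (G * ε / 2)), by positivity, ?_⟩
  intro k p hkd hpd
  have hkpos : 0 < k := by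
    have : |k - k₀| < k₀ / 2 := hkd.trans_le ((min_le_right _ _).trans (min_le_left _ _))
    rw [abs_lt] at this; linarith
  have hk1 : |k - k₀| < δ1 := hkd.trans_le ((min_le_left _ _).trans (min_le_left _ _))
  have hk2 : |k - k₀| < δ2 := hkd.trans_le ((min_le_left _ _).trans (min_le_right _ _))
  have hpd' : |p - p₀| < G * ε / 2 := hpd.trans_le ((min_le_right _ _).trans (min_le_right _ _))
  have e1 := hδ1 (by simpa [Real.dist_eq] using hk1)
  have e2 := hδ2 (by simpa [Real.dist_eq] using hk2)
  rw [Real.dist_eq] at e1 e2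
  rw [abs_lt] at e1 e2 hpd'
  -- now IVT on [x₀ - ε, x₀ + ε]
  have hcont : ContinuousOn (fun x : ℝ => s (f k - k * f' k) (f' x) - G * x) (Icc (x₀-ε) (x₀+ε)) := by
    apply ContinuousOn.sub _ (continuousOn_const.mul continuousOn_id)
    exact (sx_contOn hf hs hkpos).mono (fun y hy => hal.trans_le hy.1)
  have hvl : p < s (f k - k * f' k) (f' (x₀ - ε)) - G * (x₀ - ε) := by linarith
  have hvr : s (f k - k * f' k) (f' (x₀ + ε)) - G * (x₀ + ε) < p := by linarith
  obtain ⟨x, hxmem, hxval⟩ := intermediate_value_Icc' (by linarith : x₀ - ε ≤ x₀ + ε) hcont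
    (⟨hvr.le, hvl.le⟩ : p ∈ Icc _ _)
  refine ⟨x, ⟨hal.trans_le hxmem.1, by dsimp at hxval; linarith⟩, ?_⟩
  rw [abs_le]
  exact ⟨by linarith [hxmem.1], by linarith [hxmem.2]⟩


lemma f'_anti_le (hf : ProdAssump G f f' f'') {a b : ℝ} (ha : 0 < a) (hab : a ≤ b) :
    f' b ≤ f' a := by
  rcases eq_or_lt_of_le hab with h | h
  · rw [h]
  · exact (f'_anti hf (mem_Ioi.mpr ha) (mem_Ioi.mpr (ha.trans h)) h).le

lemma w_mono_le (hf : ProdAssump G f f' f'') {a b : ℝ} (ha : 0 < a) (hab : a ≤ b) :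
    wfun f f' a ≤ wfun f f' b := by
  rcases eq_or_lt_of_le hab with h | h
  · rw [h]
  · exact (w_mono hf (mem_Ioi.mpr ha) (mem_Ioi.mpr (ha.trans h)) h).le

lemma f_mono_le (hf : ProdAssump G f f' f'') {a b : ℝ} (ha : 0 < a) (hab : a ≤ b) :
    f a ≤ f b := by
  rcases eq_or_lt_of_le hab with h | h
  · rw [h]
  · exact (f_mono hf (mem_Ioi.mpr ha) (mem_Ioi.mpr (ha.trans h)) h).le

lemma f_slope_lt (hf : ProdAssump G f f' f'') {a b : ℝ} (ha : 0 < a) (hab : a < b) :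
    f b - f a < f' a * (b - a) := by
  obtain ⟨c, hc, hceq⟩ := exists_hasDerivAt_eq_slope f f' hab
    (fun x hx => (f_contAt hf (lt_of_lt_of_le ha hx.1)).continuousWithinAt)
    (fun x hx => hf.2.2.1 x (ha.trans hx.1))
  have hca : f' c < f' a := f'_anti hf (mem_Ioi.mpr ha) (mem_Ioi.mpr (ha.trans hc.1)) hc.1
  have : f' c * (b - a) = f b - f a := by
    rw [hceq, div_mul_cancel₀ _ (sub_ne_zero.mpr hab.ne')]
  nlinarith

/-- There is a bound `kbar` such that capital never escapes `(0, kbar]` and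
the bound is uniform over equilibria. -/
lemma exists_kbar (hf : ProdAssump G f f' f'') (hs : SavAssump s) {k0 : ℝ} (hk0 : 0 < k0) :
    ∃ kbar : ℝ, k0 ≤ kbar ∧ 0 < kbar ∧
      ∀ k p x : ℝ, 0 < k → k ≤ kbar → 0 ≤ p → IsGsol G f f' s k p x → x ≤ kbar := by
  have hG := hf.1
  obtain ⟨L, hLG, hfL⟩ := hf.2.2.2.2.2.2.2.2
  have hev : ∀ᶠ x in atTop, f' x < G ∧ 0 < x :=
    (hfL.eventually_lt_const hLG).and (eventually_gt_atTop 0)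
  obtain ⟨K0, hK0G, hK0pos⟩ := hev.exists
  have hfK0 : 0 < f' K0 := hf.2.2.2.2.2.1 K0 hK0pos
  have hden : 0 < G - f' K0 := by linarith
  set kbar : ℝ := max k0 (max K0 (f K0 / (G - f' K0))) with hkbar
  have hkbar0 : 0 < kbar := lt_max_of_lt_left hk0
  refine ⟨kbar, le_max_left _ _, hkbar0, ?_⟩
  intro k p x hk hkkb hp hsol
  have hxfk : G * x < f k := by
    have h1 := gsol_p_lt hf hs hk hsol
    have h2 : wfun f f' k < f k := by
      have := mul_pos hk (hf.2.2.2.2.2.1 k hk)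
      simp [wfun]; linarith
    linarith
  have hfK0pos : 0 < f K0 := hf.2.1 K0 hK0pos
  have hkbar2 : f K0 / (G - f' K0) ≤ kbar := le_max_of_le_right (le_max_right _ _)
  have hkey : f K0 ≤ (G - f' K0) * kbar := by
    rw [div_le_iff₀ hden] at hkbar2; linarith
  have hfk_le : f k ≤ G * kbar := by
    rcases le_or_gt k K0 with h | h
    · have : f k ≤ f K0 := f_mono_le hf hk h
      nlinarith [mul_nonneg hfK0.le hkbar0.le]
    · have h1 : f k - f K0 < f' K0 * (k - K0) := f_slope_lt hf hK0pos h
      have h2 : k ≤ kbar := hkkb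
      nlinarith
  nlinarith

/-- Comparison of two g-paths with the same initial capital. -/
lemma seq_compare (hf : ProdAssump G f f' f'') (hs : SavAssump s) {d : ℕ → ℝ}
    (k p k' p' : ℕ → ℝ) (T : ℕ)
    (hkpos : ∀ t ≤ T, 0 < k t) (hkpos' : ∀ t ≤ T, 0 < k' t)
    (hsol : ∀ t < T, IsGsol G f f' s (k t) (p t) (k (t + 1)))
    (hsol' : ∀ t < T, IsGsol G f f' s (k' t) (p' t) (k' (t + 1)))
    (hrec : ∀ t < T, p (t + 1) = f' (k (t + 1)) / G * p t - d (t + 1))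
    (hrec' : ∀ t < T, p' (t + 1) = f' (k' (t + 1)) / G * p' t - d (t + 1))
    (hinit : k 0 = k' 0) (hp0 : p 0 ≤ p' 0) (hpnn : ∀ t ≤ T, 0 ≤ p t) :
    ∀ t ≤ T, k' t ≤ k t ∧ p t ≤ p' t ∧
      (p' 0 - p 0) * ∏ i ∈ Finset.range t, (f' (k (i + 1)) / G) ≤ p' t - p t := by
  have hG := hf.1
  intro t ht
  induction t with
  | zero => exact ⟨hinit.ge, hp0, by simp⟩
  | succ t ih =>
    have ht' : t ≤ T := le_of_lt (Nat.lt_of_succ_le ht)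
    obtain ⟨ihk, ihp, ihd⟩ := ih ht'
    have htT : t < T := Nat.lt_of_succ_le ht
    have hknext : k' (t + 1) ≤ k (t + 1) :=
      gsol_mono hf hs (hkpos' t ht') (hkpos t ht') ihk ihp (hsol' t htT) (hsol t htT)
    have hR : 0 < f' (k (t + 1)) := hf.2.2.2.2.2.1 _ (hkpos _ ht)
    have hRle : f' (k (t + 1)) ≤ f' (k' (t + 1)) := f'_anti_le hf (hkpos' _ ht) hknext
    have hpt : 0 ≤ p t := hpnn t ht'
    have hstep : f' (k (t + 1)) / G * (p' t - p t) ≤ p' (t + 1) - p (t + 1) := by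
      rw [hrec t htT, hrec' t htT, div_mul_eq_mul_div, div_mul_eq_mul_div,
        div_mul_eq_mul_div]
      have key : f' (k (t+1)) * (p' t - p t) ≤ f' (k' (t+1)) * p' t - f' (k (t+1)) * p t := by
        nlinarith [mul_le_mul_of_nonneg_right hRle (hpt.trans ihp)]
      have e : (f' (k' (t+1)) * p' t - f' (k (t+1)) * p t) / G
          = f' (k' (t+1)) * p' t / G - f' (k (t+1)) * p t / G := sub_div _ _ _
      have key2 := (div_le_div_iff_of_pos_right hG).mpr key
      linarith
    have hpnext : p (t + 1) ≤ p' (t + 1) := by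
      have h0 : 0 ≤ f' (k (t + 1)) / G * (p' t - p t) := by
        apply mul_nonneg (by positivity); linarith
      linarith
    refine ⟨hknext, hpnext, ?_⟩
    rw [Finset.prod_range_succ, ← mul_assoc]
    calc (p' 0 - p 0) * (∏ i ∈ Finset.range t, (f' (k (i + 1)) / G)) * (f' (k (t+1)) / G)
        ≤ (p' t - p t) * (f' (k (t+1)) / G) := by
          apply mul_le_mul_of_nonneg_right ihd (by positivity)
      _ ≤ p' (t + 1) - p (t + 1) := by rw [mul_comm]; exact hstep


/-- The detrended discount factor `Γ_t = G^t / (R_1 ⋯ R_t)`. -/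
def Gam (G : ℝ) (f' : ℝ → ℝ) (k : ℕ → ℝ) (t : ℕ) : ℝ :=
  ∏ i ∈ Finset.range t, (G / f' (k (i + 1)))

section Equil

variable {k0 : ℝ} {d : ℕ → ℝ} {k p : ℕ → ℝ}

lemma equil_gsol (he : IsEquilibrium G f f' s k0 d k p) (t : ℕ) :
    IsGsol G f f' s (k t) (p t) (k (t + 1)) := ⟨he.1 (t + 1), he.2.2.2.1 t⟩

lemma equil_k_le (hf : ProdAssump G f f' f'') (hs : SavAssump s)
    (he : IsEquilibrium G f f' s k0 d k p) {kbar : ℝ} (hkb1 : k0 ≤ kbar)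
    (hkb : ∀ k' p' x : ℝ, 0 < k' → k' ≤ kbar → 0 ≤ p' → IsGsol G f f' s k' p' x → x ≤ kbar) :
    ∀ t, k t ≤ kbar := by
  intro t
  induction t with
  | zero => rw [he.2.2.1]; exact hkb1
  | succ t ih => exact hkb (k t) (p t) (k (t+1)) (he.1 t) ih (he.2.1 t) (equil_gsol he t)

lemma equil_p_lt (hf : ProdAssump G f f' f'') (hs : SavAssump s)
    (he : IsEquilibrium G f f' s k0 d k p) {kbar : ℝ} (hkbpos : 0 < kbar)
    (hkle : ∀ t, k t ≤ kbar) : ∀ t, p t < wfun f f' kbar := by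
  intro t
  have h1 := gsol_p_lt hf hs (he.1 t) (equil_gsol he t)
  have h2 : wfun f f' (k t) ≤ wfun f f' kbar := w_mono_le hf (he.1 t) (hkle t)
  nlinarith [mul_pos hf.1 (he.1 (t+1))]

lemma Gam_pos (hf : ProdAssump G f f' f'') (hkpos : ∀ t, 0 < k t) (t : ℕ) :
    0 < Gam G f' k t := by
  apply Finset.prod_pos
  intro i _
  exact div_pos hf.1 (hf.2.2.2.2.2.1 _ (hkpos (i+1)))

lemma Gam_succ (t : ℕ) : Gam G f' k (t+1) = Gam G f' k t * (G / f' (k (t+1))) :=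
  Finset.prod_range_succ _ _

lemma Gam_inv_prod (hf : ProdAssump G f f' f'') (hkpos : ∀ t, 0 < k t) (t : ℕ) :
    Gam G f' k t * ∏ i ∈ Finset.range t, (f' (k (i + 1)) / G) = 1 := by
  rw [Gam, ← Finset.prod_mul_distrib]
  apply Finset.prod_eq_one
  intro i _
  rw [div_mul_div_comm, mul_comm G (f' (k (i+1)))]
  exact div_self (mul_ne_zero (hf.2.2.2.2.2.1 _ (hkpos (i+1))).ne' hf.1.ne')

/-- Telescoping: `Γ_t p_t = p_0 - ∑_{i<t} Γ_{i+1} d_{i+1}`. -/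
lemma Gam_telescope (hf : ProdAssump G f f' f'') (hkpos : ∀ t, 0 < k t)
    (hrec : ∀ t, p (t + 1) = f' (k (t + 1)) / G * p t - d (t + 1)) (t : ℕ) :
    Gam G f' k t * p t = p 0 - ∑ i ∈ Finset.range t, Gam G f' k (i+1) * d (i+1) := by
  induction t with
  | zero => simp [Gam]
  | succ t ih =>
    rw [Finset.sum_range_succ, hrec t]
    have hR : f' (k (t+1)) ≠ 0 := (hf.2.2.2.2.2.1 _ (hkpos (t+1))).ne'
    have hG : (G:ℝ) ≠ 0 := hf.1.ne'
    have e1 : Gam G f' k (t+1) * (f' (k (t+1)) / G * p t - d (t+1))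
        = Gam G f' k t * p t - Gam G f' k (t+1) * d (t+1) := by
      rw [Gam_succ]
      field_simp
    rw [e1, ih]
    ring

end Equil

section Equil2

variable {k0 : ℝ} {d : ℕ → ℝ} {k p : ℕ → ℝ}

lemma partial_le (hf : ProdAssump G f f' f'') (hkpos : ∀ t, 0 < k t) (hpnn : ∀ t, 0 ≤ p t)
    (hrec : ∀ t, p (t + 1) = f' (k (t + 1)) / G * p t - d (t + 1)) (t : ℕ) :
    ∑ i ∈ Finset.range t, Gam G f' k (i+1) * d (i+1) ≤ p 0 := by
  have h := Gam_telescope hf hkpos hrec t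
  nlinarith [mul_nonneg (Gam_pos hf hkpos t).le (hpnn t)]

lemma summable_Gd (hf : ProdAssump G f f' f'') (hkpos : ∀ t, 0 < k t) (hpnn : ∀ t, 0 ≤ p t)
    (hrec : ∀ t, p (t + 1) = f' (k (t + 1)) / G * p t - d (t + 1))
    (hd : ∀ t ≥ 1, 0 ≤ d t) :
    Summable (fun i => Gam G f' k (i+1) * d (i+1)) := by
  apply summable_of_sum_range_le
    (fun i => mul_nonneg (Gam_pos hf hkpos (i+1)).le (hd (i+1) (Nat.le_add_left 1 i)))
  exact partial_le hf hkpos hpnn hrec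

lemma beta_tendsto (hf : ProdAssump G f f' f'') (hkpos : ∀ t, 0 < k t) (hpnn : ∀ t, 0 ≤ p t)
    (hrec : ∀ t, p (t + 1) = f' (k (t + 1)) / G * p t - d (t + 1))
    (hd : ∀ t ≥ 1, 0 ≤ d t) :
    Tendsto (fun t => Gam G f' k t * p t) atTop
      (𝓝 (p 0 - ∑' i, Gam G f' k (i+1) * d (i+1))) := by
  have hsum := (summable_Gd hf hkpos hpnn hrec hd).hasSum.tendsto_sum_nat
  have := (tendsto_const_nhds (x := p 0) (f := atTop (α := ℕ))).sub hsum
  apply this.congr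
  intro t
  exact (Gam_telescope hf hkpos hrec t).symm

/-- Under the divergent-dividend condition, there is no bubble term. -/
lemma beta_zero_of_div (hf : ProdAssump G f f' f'') (hkpos : ∀ t, 0 < k t)
    (hpnn : ∀ t, 0 ≤ p t)
    (hrec : ∀ t, p (t + 1) = f' (k (t + 1)) / G * p t - d (t + 1))
    (hd : ∀ t ≥ 1, 0 ≤ d t) {wbar : ℝ} (hwbar : 0 < wbar) (hple : ∀ t, p t < wbar)
    (hnd : ¬ Summable (fun t : ℕ => d (t + 1))) :
    p 0 = ∑' i, Gam G f' k (i+1) * d (i+1) := by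
  set S := ∑' i, Gam G f' k (i+1) * d (i+1) with hS
  set b0 := p 0 - S with hb0
  have htd := beta_tendsto hf hkpos hpnn hrec hd
  have hb0nn : 0 ≤ b0 := by
    apply ge_of_tendsto htd
    filter_upwards with t
    exact mul_nonneg (Gam_pos hf hkpos t).le (hpnn t)
  rcases eq_or_lt_of_le hb0nn with h | hb0pos
  · rw [hb0] at h; linarith
  exfalso
  -- β is antitone, so β_t ≥ b0 for all t
  have hbeta_ge : ∀ t, b0 ≤ Gam G f' k t * p t := by
    intro t
    rw [hb0, hS]
    apply le_of_tendsto htd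
    filter_upwards [eventually_ge_atTop t] with t' ht'
    rw [Gam_telescope hf hkpos hrec t', Gam_telescope hf hkpos hrec t]
    have : ∑ i ∈ Finset.range t, Gam G f' k (i+1) * d (i+1)
        ≤ ∑ i ∈ Finset.range t', Gam G f' k (i+1) * d (i+1) := by
      apply Finset.sum_le_sum_of_subset_of_nonneg (Finset.range_subset_range.mpr ht')
      intro i _ _
      exact mul_nonneg (Gam_pos hf hkpos (i+1)).le (hd (i+1) (Nat.le_add_left 1 i))
    linarith
  have hGam_ge : ∀ i : ℕ, b0 / wbar ≤ Gam G f' k (i+1) := by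
    intro i
    rw [div_le_iff₀ hwbar]
    calc b0 ≤ Gam G f' k (i+1) * p (i+1) := hbeta_ge (i+1)
      _ ≤ Gam G f' k (i+1) * wbar :=
          mul_le_mul_of_nonneg_left (hple (i+1)).le (Gam_pos hf hkpos (i+1)).le
  -- comparison: d is summable, contradiction
  apply hnd
  have hsum := (summable_Gd hf hkpos hpnn hrec hd).mul_left (wbar / b0)
  apply Summable.of_nonneg_of_le (fun i => hd (i+1) (Nat.le_add_left 1 i)) _ hsum
  intro i
  have h1 : (b0 / wbar) * d (i+1) ≤ Gam G f' k (i+1) * d (i+1) :=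
    mul_le_mul_of_nonneg_right (hGam_ge i) (hd (i+1) (Nat.le_add_left 1 i))
  have h2 : 0 < b0 / wbar := by positivity
  have hcanc : (wbar / b0) * (b0 / wbar) = 1 := by
    field_simp
  calc d (i+1) = (wbar / b0) * ((b0 / wbar) * d (i+1)) := by
        rw [← mul_assoc, hcanc, one_mul]
    _ ≤ (wbar / b0) * (Gam G f' k (i+1) * d (i+1)) := by
        apply mul_le_mul_of_nonneg_left h1 (by positivity)

/-- Under an eventual interest-rate bound `f' (k t) ≥ ρ > G`, `Γ_t → 0`. -/
lemma Gam_tendsto_zero (hf : ProdAssump G f f' f'') (hkpos : ∀ t, 0 < k t)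
    {ρ : ℝ} (hρG : G < ρ) {T : ℕ} (hT : ∀ i ≥ T, ρ ≤ f' (k i)) :
    Tendsto (Gam G f' k) atTop (𝓝 0) := by
  have hG := hf.1
  have hρ : 0 < ρ := hG.trans hρG
  have hgeo : ∀ n : ℕ, Gam G f' k (T + n) ≤ Gam G f' k T * (G / ρ) ^ n := by
    intro n
    induction n with
    | zero => simp
    | succ n ih =>
      have hstep : G / f' (k (T + n + 1)) ≤ G / ρ :=
        div_le_div_of_nonneg_left hG.le hρ (hT (T + n + 1) (by omega))
      have : Gam G f' k (T + (n+1)) = Gam G f' k (T + n) * (G / f' (k (T + n + 1))) := by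
        rw [show T + (n+1) = (T + n) + 1 by omega, Gam_succ]
      rw [this, pow_succ, ← mul_assoc]
      have h1 : 0 ≤ G / f' (k (T + n + 1)) :=
        (div_pos hG (hf.2.2.2.2.2.1 _ (hkpos _))).le
      calc Gam G f' k (T + n) * (G / f' (k (T + n + 1)))
          ≤ (Gam G f' k T * (G / ρ) ^ n) * (G / f' (k (T + n + 1))) :=
            mul_le_mul_of_nonneg_right ih h1
        _ ≤ (Gam G f' k T * (G / ρ) ^ n) * (G / ρ) := by
            exact mul_le_mul_of_nonneg_left hstep
              (mul_nonneg (Gam_pos hf hkpos T).le (by positivity))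
  have hlim : Tendsto (fun n => Gam G f' k T * (G / ρ) ^ n) atTop (𝓝 0) := by
    have h1 : Tendsto (fun n : ℕ => (G / ρ) ^ n) atTop (𝓝 0) :=
      tendsto_pow_atTop_nhds_zero_of_lt_one (by positivity) ((div_lt_one hρ).mpr hρG)
    have := h1.const_mul (Gam G f' k T)
    simpa using this
  have hsq : Tendsto (fun n => Gam G f' k (T + n)) atTop (𝓝 0) := by
    apply squeeze_zero (fun n => (Gam_pos hf hkpos (T+n)).le) hgeo hlim
  have : (fun n => Gam G f' k (n + T)) = fun n => Gam G f' k (T + n) := by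
    funext n; rw [add_comm]
  rw [← tendsto_add_atTop_iff_nat T, this]
  exact hsq

lemma beta_zero_of_rho (hf : ProdAssump G f f' f'') (hkpos : ∀ t, 0 < k t)
    (hpnn : ∀ t, 0 ≤ p t)
    (hrec : ∀ t, p (t + 1) = f' (k (t + 1)) / G * p t - d (t + 1))
    (hd : ∀ t ≥ 1, 0 ≤ d t) {wbar : ℝ} (hple : ∀ t, p t < wbar)
    (hGam0 : Tendsto (Gam G f' k) atTop (𝓝 0)) :
    p 0 = ∑' i, Gam G f' k (i+1) * d (i+1) := by
  have htd := beta_tendsto hf hkpos hpnn hrec hd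
  have hβ0 : Tendsto (fun t => Gam G f' k t * p t) atTop (𝓝 0) := by
    apply squeeze_zero (fun t => mul_nonneg (Gam_pos hf hkpos t).le (hpnn t))
      (fun t => mul_le_mul_of_nonneg_left (hple t).le (Gam_pos hf hkpos t).le)
    simpa using hGam0.mul_const wbar
  have := tendsto_nhds_unique htd hβ0
  linarith

/-- If `p 0` equals the fundamental value, the equilibrium is bubbleless. -/
lemma bubbleless_of_beta_zero (hf : ProdAssump G f f' f'') (hkpos : ∀ t, 0 < k t)
    (hpnn : ∀ t, 0 ≤ p t)
    (hrec : ∀ t, p (t + 1) = f' (k (t + 1)) / G * p t - d (t + 1))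
    (hd : ∀ t ≥ 1, 0 ≤ d t)
    (hb0 : p 0 = ∑' i, Gam G f' k (i+1) * d (i+1)) :
    Bubbleless G f' k p d := by
  have hG := hf.1
  intro t
  have hGam_eq : ∀ m : ℕ, Gam G f' k m = G ^ m * qseq f' k m := by
    intro m
    rw [Gam, Finset.prod_div_distrib, Finset.prod_const, Finset.card_range, qseq,
      div_eq_mul_inv]
  have hqD : ∀ m : ℕ, qseq f' k m * Dseq G d m = Gam G f' k m * d m := by
    intro m
    rw [hGam_eq, Dseq]
    ring
  have htail : ∑' n : ℕ, qseq f' k (t + 1 + n) * Dseq G d (t + 1 + n)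
      = ∑' n : ℕ, Gam G f' k (n + t + 1) * d (n + t + 1) := by
    congr 1
    funext n
    rw [show t + 1 + n = n + t + 1 by omega, hqD]
  have hsum := summable_Gd hf hkpos hpnn hrec hd
  have htsum := hsum.sum_add_tsum_nat_add t
  -- `∑' i, F (i + t) = S - partial`
  have htail2 : ∑' n : ℕ, Gam G f' k (n + t + 1) * d (n + t + 1)
      = (∑' i, Gam G f' k (i+1) * d (i+1))
        - ∑ i ∈ Finset.range t, Gam G f' k (i+1) * d (i+1) := by
    have : (fun n => Gam G f' k (n + t + 1) * d (n + t + 1))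
        = fun n => Gam G f' k ((n + t) + 1) * d ((n + t) + 1) := rfl
    rw [this]
    linarith [htsum]
  have hβ : Gam G f' k t * p t
      = ∑' n : ℕ, Gam G f' k (n + t + 1) * d (n + t + 1) := by
    rw [Gam_telescope hf hkpos hrec, htail2, hb0]
  have hGamne : Gam G f' k t ≠ 0 := (Gam_pos hf hkpos t).ne'
  rw [bubble, fundval, htail, ← hβ]
  have hzero : (G ^ t)⁻¹ * (qseq f' k t)⁻¹ = (Gam G f' k t)⁻¹ := by
    rw [hGam_eq, mul_inv]
  rw [hzero]
  field_simp
  ring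

end Equil2

section Uniq

variable {k0 : ℝ} {d : ℕ → ℝ} {k p k' p' : ℕ → ℝ} {kstar : ℕ → ℝ}

lemma kstar_pos (hk0 : 0 < k0) (hks0 : kstar 0 = k0)
    (hks : ∀ t, IsGsol G f f' s (kstar t) 0 (kstar (t + 1))) : ∀ t, 0 < kstar t := by
  intro t
  cases t with
  | zero => rw [hks0]; exact hk0
  | succ t => exact (hks t).1

lemma k_le_kstar (hf : ProdAssump G f f' f'') (hs : SavAssump s) (hk0 : 0 < k0)
    (he : IsEquilibrium G f f' s k0 d k p) (hks0 : kstar 0 = k0)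
    (hks : ∀ t, IsGsol G f f' s (kstar t) 0 (kstar (t + 1))) : ∀ t, k t ≤ kstar t := by
  intro t
  induction t with
  | zero => rw [he.2.2.1, hks0]
  | succ t ih =>
    exact gsol_mono hf hs (he.1 t) (kstar_pos hk0 hks0 hks t) ih (he.2.1 t)
      (equil_gsol he t) (hks t)

/-- From the limit condition, eventually `f' (kstar t) ≥ ρ > G`. -/
lemma rho_of_klim (hf : ProdAssump G f f' f'') (hk0 : 0 < k0) (hks0 : kstar 0 = k0)
    (hks : ∀ t, IsGsol G f f' s (kstar t) 0 (kstar (t + 1)))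
    {klim : ℝ} (hklim : Tendsto kstar atTop (nhds klim))
    (hcase : klim = 0 ∨ (0 < klim ∧ G < f' klim)) :
    ∃ ρ, G < ρ ∧ ∃ T, ∀ i ≥ T, ρ ≤ f' (kstar i) := by
  have hG := hf.1
  rcases hcase with h0 | ⟨hpos, hR⟩
  · -- klim = 0 : f' (kstar t) → ∞
    subst h0
    have h1 : Tendsto kstar atTop (nhdsWithin 0 (Ioi 0)) := by
      apply tendsto_nhdsWithin_of_tendsto_nhds_of_eventually_within _ hklim
      filter_upwards with t
      exact kstar_pos hk0 hks0 hks t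
    have h2 : Tendsto (fun t => f' (kstar t)) atTop atTop :=
      (hf.2.2.2.2.2.2.2.1).comp h1
    have h3 := h2.eventually_ge_atTop (G + 1)
    rw [eventually_atTop] at h3
    obtain ⟨T, hT⟩ := h3
    exact ⟨G + 1, by linarith, T, hT⟩
  · -- klim > 0 and f' klim > G
    have h1 : Tendsto (fun t => f' (kstar t)) atTop (𝓝 (f' klim)) :=
      (f'_contAt hf hpos).tendsto.comp hklim
    set ρ := (G + f' klim) / 2 with hρ
    have hρlt : ρ < f' klim := by rw [hρ]; linarith
    have h3 := h1.eventually_const_le hρlt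
    rw [eventually_atTop] at h3
    obtain ⟨T, hT⟩ := h3
    exact ⟨ρ, by rw [hρ]; linarith, T, hT⟩

/-- Two equilibria cannot have distinct initial prices. -/
lemma no_lt (hf : ProdAssump G f f' f'') (hs : SavAssump s) (hk0 : 0 < k0)
    (hd : ∀ t ≥ 1, 0 ≤ d t)
    (he : IsEquilibrium G f f' s k0 d k p) (he' : IsEquilibrium G f f' s k0 d k' p')
    (hD : (¬ Summable (fun t : ℕ => d (t + 1))) ∨
      (∃ ρ, G < ρ ∧ ∃ T, ∀ i ≥ T, ρ ≤ f' (k i)))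
    (hlt : p 0 < p' 0) : False := by
  have hG := hf.1
  obtain ⟨kbar, hkb1, hkbpos, hkb⟩ := exists_kbar hf hs (k0 := k0) hk0
  set wbar := wfun f f' kbar with hwbar
  have hwbarpos : 0 < wbar := w_pos hf hkbpos
  have hkle : ∀ t, k t ≤ kbar := equil_k_le hf hs he hkb1 hkb
  have hkle' : ∀ t, k' t ≤ kbar := equil_k_le hf hs he' hkb1 hkb
  have hple : ∀ t, p t < wbar := equil_p_lt hf hs he hkbpos hkle
  have hple' : ∀ t, p' t < wbar := equil_p_lt hf hs he' hkbpos hkle'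
  set Δ := p' 0 - p 0 with hΔ
  have hΔpos : 0 < Δ := by rw [hΔ]; linarith
  -- comparison bound for every t
  have hcomp : ∀ t : ℕ, Δ * ∏ i ∈ Finset.range t, (f' (k (i + 1)) / G) ≤ p' t - p t := by
    intro t
    have := seq_compare hf hs k p k' p' t (fun t' _ => he.1 t') (fun t' _ => he'.1 t')
      (fun t' _ => equil_gsol he t') (fun t' _ => equil_gsol he' t')
      (fun t' _ => he.2.2.2.2 t') (fun t' _ => he'.2.2.2.2 t')
      (he.2.2.1.trans he'.2.2.1.symm) hlt.le (fun t' _ => he.2.1 t')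
    exact (this t le_rfl).2.2
  have hGam_ge : ∀ t : ℕ, Δ / wbar ≤ Gam G f' k t := by
    intro t
    have h1 := hcomp t
    have h2 : p' t - p t ≤ wbar := by linarith [hple' t, he.2.1 t]
    have hGpos := Gam_pos hf he.1 t
    have h6 : ∏ i ∈ Finset.range t, (f' (k (i + 1)) / G) = (Gam G f' k t)⁻¹ :=
      eq_inv_of_mul_eq_one_left (by rw [mul_comm]; exact Gam_inv_prod hf he.1 t)
    rw [h6] at h1
    have h3 : Δ * (Gam G f' k t)⁻¹ ≤ wbar := h1.trans h2
    rw [div_le_iff₀ hwbarpos]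
    have hid : Δ * (Gam G f' k t)⁻¹ * Gam G f' k t = Δ := by field_simp
    nlinarith [mul_le_mul_of_nonneg_right h3 hGpos.le]
  rcases hD with hnd | ⟨ρ, hρG, T, hT⟩
  · -- divergent dividends
    apply hnd
    have hsum := (summable_Gd hf he.1 he.2.1 he.2.2.2.2 hd).mul_left (wbar / Δ)
    apply Summable.of_nonneg_of_le (fun i => hd (i+1) (Nat.le_add_left 1 i)) _ hsum
    intro i
    have h1 : (Δ / wbar) * d (i+1) ≤ Gam G f' k (i+1) * d (i+1) :=
      mul_le_mul_of_nonneg_right (hGam_ge (i+1)) (hd (i+1) (Nat.le_add_left 1 i))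
    have hcanc : (wbar / Δ) * (Δ / wbar) = 1 := by field_simp
    calc d (i+1) = (wbar / Δ) * ((Δ / wbar) * d (i+1)) := by
          rw [← mul_assoc, hcanc, one_mul]
      _ ≤ (wbar / Δ) * (Gam G f' k (i+1) * d (i+1)) :=
          mul_le_mul_of_nonneg_left h1 (by positivity)
  · -- interest rate bound
    have hGam0 := Gam_tendsto_zero hf he.1 hρG hT
    have : Δ / wbar ≤ 0 := ge_of_tendsto hGam0 (Eventually.of_forall hGam_ge)
    have : 0 < Δ / wbar := by positivity
    linarith

/-- Determinism: equilibria with the same initial price coincide. -/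
lemma equil_deterministic (hf : ProdAssump G f f' f'') (hs : SavAssump s)
    (he : IsEquilibrium G f f' s k0 d k p) (he' : IsEquilibrium G f f' s k0 d k' p')
    (hp0 : p 0 = p' 0) : ∀ t, k t = k' t ∧ p t = p' t := by
  intro t
  induction t with
  | zero => exact ⟨he.2.2.1.trans he'.2.2.1.symm, hp0⟩
  | succ t ih =>
    obtain ⟨ihk, ihp⟩ := ih
    have h1 : IsGsol G f f' s (k t) (p t) (k' (t+1)) := by
      rw [ihk, ihp]; exact equil_gsol he' t
    have hk : k (t+1) = k' (t+1) := gsol_uniq hf hs (he.1 t) (equil_gsol he t) h1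
    refine ⟨hk, ?_⟩
    rw [he.2.2.2.2 t, he'.2.2.2.2 t, hk, ihp]

end Uniq

open Classical in
/-- The forward map: the unique `g`-solution, or junk. -/
def gfun (G : ℝ) (f f' : ℝ → ℝ) (s : ℝ → ℝ → ℝ) (k p : ℝ) : ℝ :=
  if h : ∃ x, IsGsol G f f' s k p x then h.choose else 1

lemma gfun_spec {k p : ℝ} (h : ∃ x, IsGsol G f f' s k p x) :
    IsGsol G f f' s k p (gfun G f f' s k p) := by
  rw [gfun]
  rw [dif_pos h]
  exact h.choose_spec

/-- Forward path of capital and price from initial price `p0`. -/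
def KP (G : ℝ) (f f' : ℝ → ℝ) (s : ℝ → ℝ → ℝ) (k0 : ℝ) (d : ℕ → ℝ) (p0 : ℝ) : ℕ → ℝ × ℝ
  | 0 => (k0, p0)
  | t + 1 =>
    let q := KP G f f' s k0 d p0 t
    let x := gfun G f f' s q.1 q.2
    (x, f' x / G * q.2 - d (t + 1))

section Path

variable (G f f' s) in
def kk (k0 : ℝ) (d : ℕ → ℝ) (p0 : ℝ) (t : ℕ) : ℝ := (KP G f f' s k0 d p0 t).1

variable (G f f' s) in
def pp (k0 : ℝ) (d : ℕ → ℝ) (p0 : ℝ) (t : ℕ) : ℝ := (KP G f f' s k0 d p0 t).2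

variable {k0 : ℝ} {d : ℕ → ℝ}

lemma kk_zero (p0 : ℝ) : kk G f f' s k0 d p0 0 = k0 := rfl
lemma pp_zero (p0 : ℝ) : pp G f f' s k0 d p0 0 = p0 := rfl
lemma kk_succ (p0 : ℝ) (t : ℕ) :
    kk G f f' s k0 d p0 (t+1) = gfun G f f' s (kk G f f' s k0 d p0 t) (pp G f f' s k0 d p0 t) := rfl
lemma pp_succ (p0 : ℝ) (t : ℕ) :
    pp G f f' s k0 d p0 (t+1)
      = f' (kk G f f' s k0 d p0 (t+1)) / G * pp G f f' s k0 d p0 t - d (t + 1) := rfl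

variable (G f f' s) in
/-- The first `T` steps of the forward path are well defined. -/
def Ok (k0 : ℝ) (d : ℕ → ℝ) (p0 : ℝ) (T : ℕ) : Prop :=
  ∀ t < T, ∃ x, IsGsol G f f' s (kk G f f' s k0 d p0 t) (pp G f f' s k0 d p0 t) x

lemma Ok.mono {p0 : ℝ} {T T' : ℕ} (h : Ok G f f' s k0 d p0 T) (hT : T' ≤ T) :
    Ok G f f' s k0 d p0 T' := fun t ht => h t (lt_of_lt_of_le ht hT)

lemma kk_sol {p0 : ℝ} {T : ℕ} (h : Ok G f f' s k0 d p0 T) :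
    ∀ t < T, IsGsol G f f' s (kk G f f' s k0 d p0 t) (pp G f f' s k0 d p0 t)
      (kk G f f' s k0 d p0 (t+1)) :=
  fun t ht => by rw [kk_succ]; exact gfun_spec (h t ht)

lemma kk_pos (hk0 : 0 < k0) {p0 : ℝ} {T : ℕ} (h : Ok G f f' s k0 d p0 T) :
    ∀ t ≤ T, 0 < kk G f f' s k0 d p0 t := by
  intro t ht
  cases t with
  | zero => exact hk0
  | succ t => exact (kk_sol h t (by omega)).1

/-- Continuity of the path maps in the initial price. -/
lemma path_contAt (hf : ProdAssump G f f' f'') (hs : SavAssump s) (hk0 : 0 < k0)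
    {c : ℝ} {n : ℕ} (hOk : Ok G f f' s k0 d c n) :
    ∀ t ≤ n, ContinuousAt (fun q => kk G f f' s k0 d q t) c ∧
      ContinuousAt (fun q => pp G f f' s k0 d q t) c := by
  intro t ht
  induction t with
  | zero =>
    constructor
    · exact continuousAt_const
    · exact continuousAt_id
  | succ t ih =>
    obtain ⟨ihk, ihp⟩ := ih (by omega)
    have hsol := kk_sol hOk t (by omega)
    have hkpos := kk_pos hk0 hOk t (by omega)
    have hxpos : 0 < kk G f f' s k0 d c (t+1) := (kk_sol hOk t (by omega)).1
    have hKcont : ContinuousAt (fun q => kk G f f' s k0 d q (t+1)) c := by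
      rw [Metric.continuousAt_iff]
      intro ε hε
      set ε' := min (ε/2) (kk G f f' s k0 d c (t+1) / 2) with hε'
      have hε'pos : 0 < ε' := lt_min (by linarith) (by linarith)
      have hε'x : ε' < kk G f f' s k0 d c (t+1) :=
        lt_of_le_of_lt (min_le_right _ _) (by linarith)
      obtain ⟨δ, hδpos, hδ⟩ := gsol_cont hf hs hkpos hsol hε'pos hε'x
      -- also ensure positivity of the perturbed capital
      set δ' := min δ (kk G f f' s k0 d c t / 2) with hδ'
      have hδ'pos : 0 < δ' := lt_min hδpos (by linarith)
      obtain ⟨δ1, hδ1pos, hδ1⟩ := Metric.continuousAt_iff.mp ihk δ' hδ'pos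
      obtain ⟨δ2, hδ2pos, hδ2⟩ := Metric.continuousAt_iff.mp ihp δ' hδ'pos
      refine ⟨min δ1 δ2, lt_min hδ1pos hδ2pos, ?_⟩
      intro q hq
      have h1 := hδ1 (lt_of_lt_of_le hq (min_le_left _ _))
      have h2 := hδ2 (lt_of_lt_of_le hq (min_le_right _ _))
      rw [Real.dist_eq] at h1 h2 ⊢
      have hq1 : |kk G f f' s k0 d q t - kk G f f' s k0 d c t| < δ :=
        lt_of_lt_of_le h1 (min_le_left _ _)
      have hq2 : |pp G f f' s k0 d q t - pp G f f' s k0 d c t| < δ :=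
        lt_of_lt_of_le h2 (min_le_left _ _)
      have hqpos : 0 < kk G f f' s k0 d q t := by
        have := lt_of_lt_of_le h1 (min_le_right _ _)
        rw [abs_lt] at this
        linarith
      obtain ⟨x, hxsol, hxclose⟩ := hδ _ _ hq1 hq2
      have : kk G f f' s k0 d q (t+1) = x := by
        rw [kk_succ]
        exact gsol_uniq hf hs hqpos (gfun_spec ⟨x, hxsol⟩) hxsol
      rw [this]
      calc |x - kk G f f' s k0 d c (t+1)| ≤ ε' := hxclose
        _ ≤ ε/2 := min_le_left _ _
        _ < ε := by linarith
    refine ⟨hKcont, ?_⟩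
    have : (fun q => pp G f f' s k0 d q (t+1))
        = fun q => f' (kk G f f' s k0 d q (t+1)) / G * pp G f f' s k0 d q t - d (t+1) := by
      funext q; exact pp_succ q t
    rw [this]
    apply ContinuousAt.sub _ continuousAt_const
    apply ContinuousAt.mul _ ihp
    apply ContinuousAt.div_const
    exact Filter.Tendsto.comp (f'_contAt hf hxpos) hKcont

/-- Well-definedness of the path is an open condition. -/
lemma Ok_eventually (hf : ProdAssump G f f' f'') (hs : SavAssump s) (hk0 : 0 < k0)
    {c : ℝ} {n : ℕ} (hOk : Ok G f f' s k0 d c n) :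
    ∀ᶠ q in 𝓝 c, Ok G f f' s k0 d q n := by
  induction n with
  | zero => filter_upwards with q; intro t ht; omega
  | succ n ih =>
    have hOkn : Ok G f f' s k0 d c n := hOk.mono (by omega)
    have hev1 := ih hOkn
    -- the cap at stage n survives small perturbations
    have hsol := kk_sol hOk n (by omega)
    have hkpos := kk_pos hk0 hOkn n le_rfl
    have hxpos : 0 < kk G f f' s k0 d c (n+1) := (kk_sol hOk n (by omega)).1
    obtain ⟨δ, hδpos, hδ⟩ := gsol_cont hf hs hkpos hsol
      (half_pos hxpos) (by linarith)
    obtain ⟨hck, hcp⟩ := path_contAt hf hs hk0 hOkn n le_rfl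
    have hev2 : ∀ᶠ q in 𝓝 c, |kk G f f' s k0 d q n - kk G f f' s k0 d c n| < δ := by
      have := Metric.continuousAt_iff.mp hck δ hδpos
      obtain ⟨δ1, hδ1pos, hδ1⟩ := this
      filter_upwards [Metric.ball_mem_nhds c hδ1pos] with q hq
      have := hδ1 ((Metric.mem_ball.mp hq))
      rwa [Real.dist_eq] at this
    have hev3 : ∀ᶠ q in 𝓝 c, |pp G f f' s k0 d q n - pp G f f' s k0 d c n| < δ := by
      obtain ⟨δ2, hδ2pos, hδ2⟩ := Metric.continuousAt_iff.mp hcp δ hδpos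
      filter_upwards [Metric.ball_mem_nhds c hδ2pos] with q hq
      have := hδ2 ((Metric.mem_ball.mp hq))
      rwa [Real.dist_eq] at this
    filter_upwards [hev1, hev2, hev3] with q h1 h2 h3
    intro t ht
    rcases Nat.lt_succ_iff_lt_or_eq.mp ht with h | h
    · exact h1 t h
    · subst h
      obtain ⟨x, hxsol, _⟩ := hδ _ _ h2 h3
      exact ⟨x, hxsol⟩

end Path

section Exist

variable {k0 : ℝ} {d : ℕ → ℝ}

/-- Blow-up lemma: if the path is defined up to `n` at the limit `c` of a
monotone sequence `q j`, each `q j` path is fine to `n+1` with nonnegative prices,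
but the cap at `n` fails at `c`, then prices at `n+1` blow up along `q`. -/
lemma blowup (hf : ProdAssump G f f' f'') (hs : SavAssump s) (hk0 : 0 < k0)
    {c : ℝ} {n : ℕ} {q : ℕ → ℝ} (hqmono : Monotone q) (hqc : Tendsto q atTop (𝓝 c))
    (hq : ∀ j, Ok G f f' s k0 d (q j) (n+1) ∧ ∀ t ≤ n, 0 ≤ pp G f f' s k0 d (q j) t)
    (hOkc : Ok G f f' s k0 d c n)
    (hfail : ¬ ∃ x, IsGsol G f f' s (kk G f f' s k0 d c n) (pp G f f' s k0 d c n) x) :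
    Tendsto (fun j => pp G f f' s k0 d (q j) (n+1)) atTop atTop := by
  have hG := hf.1
  have hkcn : 0 < kk G f f' s k0 d c n := kk_pos hk0 hOkc n le_rfl
  have hpstar_pos : 0 < pp G f f' s k0 d c n := by
    by_contra h
    push_neg at h
    exact hfail (gsol_exists_of_nonpos hf hs hkcn h)
  obtain ⟨hck, hcp⟩ := path_contAt hf hs hk0 hOkc n le_rfl
  have hkq : Tendsto (fun j => kk G f f' s k0 d (q j) n) atTop (𝓝 (kk G f f' s k0 d c n)) :=
    Filter.Tendsto.comp (g := fun z => kk G f f' s k0 d z n) hck.tendsto hqc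
  have hpq : Tendsto (fun j => pp G f f' s k0 d (q j) n) atTop (𝓝 (pp G f f' s k0 d c n)) :=
    Filter.Tendsto.comp (g := fun z => pp G f f' s k0 d z n) hcp.tendsto hqc
  set x : ℕ → ℝ := fun j => kk G f f' s k0 d (q j) (n+1) with hxdef
  have hxsol : ∀ j, IsGsol G f f' s (kk G f f' s k0 d (q j) n)
      (pp G f f' s k0 d (q j) n) (x j) := fun j => kk_sol (hq j).1 n (by omega)
  have hxpos : ∀ j, 0 < x j := fun j => (hxsol j).1
  have hanti : Antitone x := by
    intro j j' hjj
    have hcmp := seq_compare hf hs (d := d) (kk G f f' s k0 d (q j)) (pp G f f' s k0 d (q j))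
      (kk G f f' s k0 d (q j')) (pp G f f' s k0 d (q j')) n
      (fun t ht => kk_pos hk0 ((hq j).1.mono (by omega)) t ht)
      (fun t ht => kk_pos hk0 ((hq j').1.mono (by omega)) t ht)
      (fun t ht => kk_sol (hq j).1 t (by omega))
      (fun t ht => kk_sol (hq j').1 t (by omega))
      (fun t _ => pp_succ _ t) (fun t _ => pp_succ _ t)
      rfl (hqmono hjj) (fun t ht => (hq j).2 t ht)
    obtain ⟨hkn, hpn, -⟩ := hcmp n le_rfl
    exact gsol_mono hf hs (kk_pos hk0 ((hq j').1.mono (by omega)) n le_rfl)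
      (kk_pos hk0 ((hq j).1.mono (by omega)) n le_rfl) hkn hpn (hxsol j') (hxsol j)
  have hbdd : BddBelow (range x) := ⟨0, fun y hy => by
    obtain ⟨j, rfl⟩ := hy; exact (hxpos j).le⟩
  have hκlim : Tendsto x atTop (𝓝 (⨅ j, x j)) := tendsto_atTop_ciInf hanti hbdd
  set κ := ⨅ j, x j with hκdef
  have hκnn : 0 ≤ κ := le_ciInf fun j => (hxpos j).le
  rcases eq_or_lt_of_le hκnn with hκ0 | hκpos
  · -- κ = 0 : blow-up
    have hx0 : Tendsto x atTop (𝓝 0) := by rw [hκ0]; exact hκlim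
    have hxin : Tendsto x atTop (nhdsWithin 0 (Ioi 0)) :=
      tendsto_nhdsWithin_of_tendsto_nhds_of_eventually_within _ hx0
        (Eventually.of_forall fun j => hxpos j)
    have hf'x : Tendsto (fun j => f' (x j)) atTop atTop :=
      (hf.2.2.2.2.2.2.2.1).comp hxin
    have hmul : Tendsto (fun j => pp G f f' s k0 d (q j) n * f' (x j)) atTop atTop :=
      Filter.Tendsto.pos_mul_atTop hpstar_pos hpq hf'x
    have hdiv : Tendsto (fun j => pp G f f' s k0 d (q j) n * f' (x j) / G) atTop atTop :=
      hmul.atTop_div_const hG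
    have := tendsto_atTop_add_const_right atTop (-d (n+1)) hdiv
    apply this.congr
    intro j
    rw [pp_succ]
    have : kk G f f' s k0 d (q j) (n+1) = x j := rfl
    rw [this]
    ring
  · -- κ > 0 : the cap at `n` would hold at `c`
    exfalso
    have he1 : Tendsto (fun j => G * x j + pp G f f' s k0 d (q j) n) atTop
        (𝓝 (G * κ + pp G f f' s k0 d c n)) :=
      ((tendsto_const_nhds.mul hκlim).add hpq)
    have he3 : Tendsto (fun j => s (wfun f f' (kk G f f' s k0 d (q j) n)) (f' (x j)))
        atTop (𝓝 (s (wfun f f' (kk G f f' s k0 d c n)) (f' κ))) := by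
      have hinner : Tendsto (fun j => ((kk G f f' s k0 d (q j) n, x j) : ℝ × ℝ)) atTop
          (𝓝 (kk G f f' s k0 d c n, κ)) := hkq.prodMk_nhds hκlim
      exact Filter.Tendsto.comp (sw_contAt hf hs hkcn hκpos) hinner
    have he2 : (fun j => G * x j + pp G f f' s k0 d (q j) n)
        = fun j => s (wfun f f' (kk G f f' s k0 d (q j) n)) (f' (x j)) := by
      funext j
      exact (hxsol j).2
    rw [he2] at he1
    have heq := tendsto_nhds_unique he1 he3
    exact hfail ⟨κ, hκpos, heq⟩

end Exist

section Exist2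

variable {k0 : ℝ} {d : ℕ → ℝ}

lemma ex_step (hf : ProdAssump G f f' f'') (hs : SavAssump s) (hk0 : 0 < k0)
    (hd : ∀ t ≥ 1, 0 ≤ d t) {p0 : ℝ} {T : ℕ}
    (hOk : Ok G f f' s k0 d p0 T) (hpnn : ∀ t ≤ T, 0 ≤ pp G f f' s k0 d p0 t)
    (hend : pp G f f' s k0 d p0 T = 0) :
    ∃ p1, p0 ≤ p1 ∧ Ok G f f' s k0 d p1 (T+1) ∧
      (∀ t ≤ T+1, 0 ≤ pp G f f' s k0 d p1 t) ∧ pp G f f' s k0 d p1 (T+1) = 0 := by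
  have hG := hf.1
  obtain ⟨kbar, hkb1, hkbpos, hkb⟩ := exists_kbar hf hs (k0 := k0) hk0
  have hOk1 : Ok G f f' s k0 d p0 (T+1) := by
    intro t ht
    rcases Nat.lt_succ_iff_lt_or_eq.mp ht with h | h
    · exact hOk t h
    · subst h
      exact gsol_exists_of_nonpos hf hs (kk_pos hk0 hOk t le_rfl) hend.le
  set A : Set ℝ := {b : ℝ | p0 ≤ b ∧ ∀ q ∈ Icc p0 b, Ok G f f' s k0 d q (T+1)} with hA
  have hp0A : p0 ∈ A := by
    refine ⟨le_rfl, ?_⟩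
    intro q hq
    have : q = p0 := le_antisymm hq.2 hq.1
    rw [this]; exact hOk1
  -- facts valid on the band
  have band_pnn : ∀ b ∈ A, ∀ q ∈ Icc p0 b, ∀ t ≤ T, 0 ≤ pp G f f' s k0 d q t := by
    intro b hbA q hq t ht
    have hOkq : Ok G f f' s k0 d q (T+1) := hbA.2 q hq
    have hcmp := seq_compare hf hs (d := d) (kk G f f' s k0 d p0) (pp G f f' s k0 d p0)
      (kk G f f' s k0 d q) (pp G f f' s k0 d q) T
      (fun t' ht' => kk_pos hk0 hOk t' ht')
      (fun t' ht' => kk_pos hk0 (hOkq.mono (by omega)) t' ht')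
      (fun t' ht' => kk_sol hOk t' ht')
      (fun t' ht' => kk_sol (hOkq.mono (by omega)) t' ht')
      (fun t' _ => pp_succ _ t') (fun t' _ => pp_succ _ t')
      rfl hq.1 hpnn
    exact (hpnn t ht).trans ((hcmp t ht).2.1)
  have band_k : ∀ b ∈ A, ∀ q ∈ Icc p0 b, ∀ t ≤ T+1, kk G f f' s k0 d q t ≤ kbar := by
    intro b hbA q hq t ht
    induction t with
    | zero => exact hkb1
    | succ t ih =>
      have ht' : t ≤ T := by omega
      have hOkt : Ok G f f' s k0 d q t := (hbA.2 q hq).mono (by omega)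
      exact hkb _ _ _ (kk_pos hk0 hOkt t le_rfl)
        (ih (by omega)) (band_pnn b hbA q hq t ht') (kk_sol (hbA.2 q hq) t (by omega))
  have band_plt : ∀ b ∈ A, ∀ q ∈ Icc p0 b, ∀ t ≤ T,
      pp G f f' s k0 d q t < wfun f f' kbar := by
    intro b hbA q hq t ht
    have hsol := kk_sol (hbA.2 q hq) t (by omega)
    have hOkt : Ok G f f' s k0 d q t := (hbA.2 q hq).mono (by omega)
    have hkpos := kk_pos hk0 hOkt t le_rfl
    have h1 := gsol_p_lt hf hs hkpos hsol
    have h2 : wfun f f' (kk G f f' s k0 d q t) ≤ wfun f f' kbar :=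
      w_mono_le hf hkpos (band_k b hbA q hq t (by omega))
    nlinarith [mul_pos hG hsol.1]
  have hblt : ∀ b ∈ A, b < wfun f f' k0 := by
    intro b hbA
    have hsol := kk_sol (hbA.2 b ⟨hbA.1, le_rfl⟩) 0 (by omega)
    have h1 := gsol_p_lt hf hs (show (0:ℝ) < kk G f f' s k0 d b 0 from hk0) hsol
    have : pp G f f' s k0 d b 0 = b := rfl
    rw [this] at h1
    have : kk G f f' s k0 d b 0 = k0 := rfl
    rw [this] at h1
    nlinarith [mul_pos hG hsol.1]
  have hAbdd : BddAbove A := ⟨wfun f f' k0, fun b hb => (hblt b hb).le⟩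
  have hAne : A.Nonempty := ⟨p0, hp0A⟩
  by_cases hC : ∃ b ∈ A, 0 ≤ pp G f f' s k0 d b (T+1)
  · -- IVT case
    obtain ⟨b, hbA, hb⟩ := hC
    have hcont : ContinuousOn (fun q => pp G f f' s k0 d q (T+1)) (Icc p0 b) := by
      intro q hq
      exact ((path_contAt hf hs hk0 (hbA.2 q hq) (T+1) le_rfl).2).continuousWithinAt
    have hφp0 : pp G f f' s k0 d p0 (T+1) ≤ 0 := by
      rw [pp_succ, hend]
      have := hd (T+1) (by omega)
      simp
      linarith
    obtain ⟨p1, hp1mem, hp1val0⟩ := intermediate_value_Icc hbA.1 hcont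
      (⟨hφp0, hb⟩ : (0:ℝ) ∈ Icc _ _)
    have hp1val : pp G f f' s k0 d p1 (T+1) = 0 := hp1val0
    refine ⟨p1, hp1mem.1, hbA.2 p1 hp1mem, ?_, hp1val⟩
    intro t ht
    rcases Nat.lt_succ_iff_lt_or_eq.mp (Nat.lt_succ_of_le ht) with h | h
    · exact band_pnn b hbA p1 hp1mem t (by omega)
    · rw [h, hp1val]
  · -- blow-up case: contradiction
    exfalso
    push_neg at hC
    set c := sSup A with hc
    have hp0c : p0 ≤ c := le_csSup hAbdd hp0A
    have hIc : ∀ q, p0 ≤ q → q < c → q ∈ A := by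
      intro q hq0 hqc
      obtain ⟨b, hbA, hqb⟩ := exists_lt_of_lt_csSup hAne hqc
      exact ⟨hq0, fun r hr => hbA.2 r ⟨hr.1, hr.2.trans hqb.le⟩⟩
    have hnotOk : ¬ Ok G f f' s k0 d c (T+1) := by
      intro hOkc
      obtain ⟨δ, hδpos, hball⟩ :=
        Metric.eventually_nhds_iff_ball.mp (Ok_eventually hf hs hk0 hOkc)
      have hmem : c + δ/2 ∈ A := by
        refine ⟨by linarith, ?_⟩
        intro r hr
        rcases lt_or_ge r c with h | h
        · exact ((hIc r hr.1 h).2) r ⟨hr.1, le_rfl⟩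
        · apply hball
          rw [Metric.mem_ball, Real.dist_eq, abs_lt]
          constructor <;> [linarith [hr.2]; linarith [hr.2]]
      have := le_csSup hAbdd hmem
      linarith
    have hex : ∃ t, ¬ ∃ x, IsGsol G f f' s (kk G f f' s k0 d c t) (pp G f f' s k0 d c t) x := by
      by_contra h
      push_neg at h
      exact hnotOk (fun t _ => h t)
    classical
    set tstar := Nat.find hex with htstar
    have hfailc := Nat.find_spec hex
    have hOkc_t : Ok G f f' s k0 d c tstar := by
      intro t ht
      have := Nat.find_min hex ht
      push_neg at this
      exact this
    have htstarT : tstar ≤ T := by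
      by_contra hcon
      push_neg at hcon
      exact hnotOk (fun t ht => by
        have := Nat.find_min hex (show t < tstar by omega)
        push_neg at this
        exact this)
    have hp0c' : p0 < c := by
      rcases eq_or_lt_of_le hp0c with h | h
      · exact absurd (h ▸ hOk1) hnotOk
      · exact h
    set q : ℕ → ℝ := fun j => c - (c - p0)/(j+1) with hq
    have hqmem : ∀ j : ℕ, p0 ≤ q j ∧ q j < c := by
      intro j
      have h1 : (0:ℝ) < (j:ℝ) + 1 := by positivity
      constructor
      · have : (c - p0)/((j:ℝ)+1) ≤ (c - p0)/1 := by
          apply div_le_div_of_nonneg_left (by linarith) one_pos (by linarith)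
        simp only [hq]
        rw [div_one] at this
        linarith
      · have : 0 < (c - p0)/((j:ℝ)+1) := div_pos (by linarith) h1
        simp only [hq]
        linarith
    have hqmono : Monotone q := by
      intro j j' hjj
      simp only [hq]
      have h1 : (0:ℝ) < (j:ℝ) + 1 := by positivity
      have h2 : ((j:ℝ)+1) ≤ ((j':ℝ)+1) := by
        have : (j:ℝ) ≤ (j':ℝ) := Nat.cast_le.mpr hjj
        linarith
      have := div_le_div_of_nonneg_left (show (0:ℝ) ≤ c - p0 by linarith) h1 h2
      linarith
    have hqc : Tendsto q atTop (𝓝 c) := by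
      have h1 : Tendsto (fun j : ℕ => (c - p0)/((j:ℝ)+1)) atTop (𝓝 0) := by
        apply Tendsto.div_atTop tendsto_const_nhds
        exact tendsto_atTop_add_const_right atTop 1 tendsto_natCast_atTop_atTop
      have := h1.const_sub c
      simpa using this
    have hqA : ∀ j, q j ∈ A := fun j => hIc (q j) (hqmem j).1 (hqmem j).2
    have hqfacts : ∀ j : ℕ, Ok G f f' s k0 d (q j) (tstar+1) ∧
        ∀ t ≤ tstar, 0 ≤ pp G f f' s k0 d (q j) t := by
      intro j
      refine ⟨((hqA j).2 (q j) ⟨(hqmem j).1, le_rfl⟩).mono (by omega), ?_⟩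
      intro t ht
      exact band_pnn (q j) (hqA j) (q j) ⟨(hqmem j).1, le_rfl⟩ t (by omega)
    have hbl := blowup hf hs hk0 hqmono hqc hqfacts hOkc_t hfailc
    rcases eq_or_lt_of_le htstarT with hteq | htlt
    · -- tstar = T : prices at T+1 are negative along q but blow up
      obtain ⟨j, hj⟩ := (hbl.eventually_gt_atTop 0).exists
      have := hC (q j) (hqA j)
      rw [hteq] at hj
      linarith
    · -- tstar < T : prices at tstar+1 are bounded by wbar but blow up
      obtain ⟨j, hj⟩ := (hbl.eventually_gt_atTop (wfun f f' kbar)).exists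
      have := band_plt (q j) (hqA j) (q j) ⟨(hqmem j).1, le_rfl⟩ (tstar+1) (by omega)
      linarith

end Exist2

section Exist3

variable {k0 : ℝ} {d : ℕ → ℝ}

lemma exists_equilibrium (hf : ProdAssump G f f' f'') (hs : SavAssump s) (hk0 : 0 < k0)
    (hd : ∀ t ≥ 1, 0 ≤ d t) :
    ∃ k p : ℕ → ℝ, IsEquilibrium G f f' s k0 d k p := by
  have hG := hf.1
  classical
  -- the approximating sequence of finite-horizon equilibria
  let D : ℕ → Type := fun T => {q : ℝ // Ok G f f' s k0 d q T ∧
    (∀ t ≤ T, 0 ≤ pp G f f' s k0 d q t) ∧ pp G f f' s k0 d q T = 0}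
  let base : D 0 := ⟨0, fun t ht => absurd ht (by omega),
    fun t ht => by
      have h0 : t = 0 := by omega
      rw [h0]
      exact le_rfl, rfl⟩
  let step : ∀ T, D T → D (T+1) := fun T x =>
    let h := ex_step hf hs hk0 hd x.2.1 x.2.2.1 x.2.2.2
    ⟨h.choose, h.choose_spec.2.1, h.choose_spec.2.2.1, h.choose_spec.2.2.2⟩
  let Pc : ∀ T : ℕ, D T := fun T => Nat.rec base step T
  let P : ℕ → ℝ := fun T => (Pc T).1
  have hprop : ∀ T, Ok G f f' s k0 d (P T) T ∧
      (∀ t ≤ T, 0 ≤ pp G f f' s k0 d (P T) t) ∧ pp G f f' s k0 d (P T) T = 0 :=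
    fun T => (Pc T).2
  have hPsucc : ∀ T, P T ≤ P (T+1) := by
    intro T
    show (Pc T).1 ≤ (step T (Pc T)).1
    exact (ex_step hf hs hk0 hd (Pc T).2.1 (Pc T).2.2.1 (Pc T).2.2.2).choose_spec.1
  have hPmono : Monotone P := monotone_nat_of_le_succ hPsucc
  have hPnn : ∀ T, 0 ≤ P T := by
    intro T
    have := (hprop T).2.1 0 (by omega)
    exact this
  have hPlt : ∀ T, P T ≤ wfun f f' k0 := by
    intro T
    cases T with
    | zero =>
      have : P 0 = 0 := rfl
      rw [this]
      exact (w_pos hf hk0).le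
    | succ T =>
      have hsol := kk_sol (hprop (T+1)).1 0 (by omega)
      have h1 := gsol_p_lt hf hs (show (0:ℝ) < kk G f f' s k0 d (P (T+1)) 0 from hk0) hsol
      have h2 : pp G f f' s k0 d (P (T+1)) 0 = P (T+1) := rfl
      have h3 : kk G f f' s k0 d (P (T+1)) 0 = k0 := rfl
      rw [h2, h3] at h1
      nlinarith [mul_pos hG hsol.1]
  have hbddP : BddAbove (range P) := ⟨wfun f f' k0, fun y hy => by
    obtain ⟨T, rfl⟩ := hy; exact hPlt T⟩
  set pinf := ⨆ T, P T with hpinf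
  have hconv : Tendsto P atTop (𝓝 pinf) := tendsto_atTop_ciSup hPmono hbddP
  -- the path is well defined at the limit price
  have hOkinf : ∀ n, Ok G f f' s k0 d pinf n := by
    intro n
    induction n with
    | zero => exact fun t ht => absurd ht (by omega)
    | succ n ih =>
      have hcap : ∃ x, IsGsol G f f' s (kk G f f' s k0 d pinf n)
          (pp G f f' s k0 d pinf n) x := by
        by_contra hfail
        set q : ℕ → ℝ := fun j => P (j + (n+2)) with hq
        have hqmono : Monotone q := by
          intro j j' h
          show P (j + (n+2)) ≤ P (j' + (n+2))
          exact hPmono (Nat.succ_le_succ (Nat.add_le_add_right h _))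
        have hqc : Tendsto q atTop (𝓝 pinf) :=
          hconv.comp (tendsto_add_atTop_nat (n+2))
        have hqfacts : ∀ j : ℕ, Ok G f f' s k0 d (q j) (n+1) ∧
            ∀ t ≤ n, 0 ≤ pp G f f' s k0 d (q j) t := by
          intro j
          refine ⟨(hprop (j + (n+2))).1.mono (by omega), ?_⟩
          intro t ht
          exact (hprop (j + (n+2))).2.1 t (by omega)
        have hbl := blowup hf hs hk0 hqmono hqc hqfacts ih hfail
        -- uniform bound on prices at n+1 along the sequence
        set W0 := wfun f f' (kk G f f' s k0 d (q 0) (n+1)) with hW0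
        have hbound : ∀ j, pp G f f' s k0 d (q j) (n+1) < W0 := by
          intro j
          have hOkj : Ok G f f' s k0 d (q j) (j + (n+2)) := (hprop (j + (n+2))).1
          have hsolj := kk_sol hOkj (n+1) (by omega)
          have hkposj : 0 < kk G f f' s k0 d (q j) (n+1) :=
            kk_pos hk0 (hOkj.mono (by omega)) (n+1) le_rfl
          have h1 := gsol_p_lt hf hs hkposj hsolj
          -- compare with the `q 0` path to bound the wealth
          have hcmp := seq_compare hf hs (d := d)
            (kk G f f' s k0 d (q 0)) (pp G f f' s k0 d (q 0))
            (kk G f f' s k0 d (q j)) (pp G f f' s k0 d (q j)) (n+1)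
            (fun t ht => kk_pos hk0 ((hprop (0 + (n+2))).1.mono (by omega)) t le_rfl)
            (fun t ht => kk_pos hk0 ((hprop (j + (n+2))).1.mono (by omega)) t le_rfl)
            (fun t ht => kk_sol (hprop (0 + (n+2))).1 t (by omega))
            (fun t ht => kk_sol (hprop (j + (n+2))).1 t (by omega))
            (fun t _ => pp_succ _ t) (fun t _ => pp_succ _ t)
            rfl (hqmono (Nat.zero_le j)) (fun t ht => (hprop (0 + (n+2))).2.1 t (by omega))
          have hkle : kk G f f' s k0 d (q j) (n+1) ≤ kk G f f' s k0 d (q 0) (n+1) :=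
            (hcmp (n+1) le_rfl).1
          have h2 : wfun f f' (kk G f f' s k0 d (q j) (n+1)) ≤ W0 :=
            w_mono_le hf hkposj hkle
          nlinarith [mul_pos hG hsolj.1]
        obtain ⟨j, hj⟩ := (hbl.eventually_gt_atTop W0).exists
        linarith [hbound j]
      intro t ht
      rcases Nat.lt_succ_iff_lt_or_eq.mp ht with h | h
      · exact ih t h
      · subst h; exact hcap
  -- the equilibrium
  refine ⟨kk G f f' s k0 d pinf, pp G f f' s k0 d pinf, ?_, ?_, rfl, ?_, ?_⟩
  · intro t
    exact kk_pos hk0 (hOkinf t) t le_rfl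
  · intro t
    have hcont := (path_contAt hf hs hk0 (hOkinf t) t le_rfl).2
    have htd : Tendsto (fun j => pp G f f' s k0 d (P j) t) atTop
        (𝓝 (pp G f f' s k0 d pinf t)) :=
      Filter.Tendsto.comp (g := fun z => pp G f f' s k0 d z t) hcont.tendsto hconv
    apply ge_of_tendsto htd
    filter_upwards [eventually_ge_atTop t] with j hj
    exact (hprop j).2.1 t hj
  · intro t
    exact (kk_sol (hOkinf (t+1)) t (by omega)).2
  · intro t
    exact pp_succ _ t

end Exist3

end Auxiliary

/-- Corollary `cor:bubbleless2`: with `k*` the limit of the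
Diamond sequence and `R* = f'(k*)` (read as `∞` when `k* = 0`), if either
`∑ d_t = ∞` or `R* > G`, then there exists exactly one equilibrium and it is
bubbleless. -/
theorem stmt10 (G : ℝ) (f f' f'' : ℝ → ℝ) (s : ℝ → ℝ → ℝ)
    (hf : ProdAssump G f f' f'') (hs : SavAssump s) (hsU : SavFromUtility s)
    (k0 : ℝ) (hk0 : 0 < k0) (d : ℕ → ℝ) (hd : ∀ t ≥ 1, 0 ≤ d t)
    (kstar : ℕ → ℝ) (hks0 : kstar 0 = k0)
    (hks : ∀ t, IsGsol G f f' s (kstar t) 0 (kstar (t + 1)))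
    (klim : ℝ) (hklim : Tendsto kstar atTop (nhds klim))
    (hcond : (¬ Summable (fun t : ℕ => d (t + 1))) ∨
      klim = 0 ∨ (0 < klim ∧ G < f' klim)) :
    ∃ k p : ℕ → ℝ,
      (IsEquilibrium G f f' s k0 d k p ∧ Bubbleless G f' k p d) ∧
      ∀ k' p' : ℕ → ℝ, IsEquilibrium G f f' s k0 d k' p' →
        (∀ t, k' t = k t) ∧ (∀ t, p' t = p t) := by
  have hG := hf.1
  obtain ⟨k, p, he⟩ := exists_equilibrium hf hs hk0 hd
  -- the dichotomy holds along any equilibrium path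
  have hD : ∀ k' p' : ℕ → ℝ, IsEquilibrium G f f' s k0 d k' p' →
      ((¬ Summable fun t : ℕ => d (t + 1)) ∨ ∃ ρ, G < ρ ∧ ∃ T, ∀ i ≥ T, ρ ≤ f' (k' i)) := by
    intro k' p' he'
    have hcase : (¬ Summable fun t : ℕ => d (t + 1)) ∨
        (klim = 0 ∨ (0 < klim ∧ G < f' klim)) := by
      rcases hcond with h | h | h
      · exact Or.inl h
      · exact Or.inr (Or.inl h)
      · exact Or.inr (Or.inr h)
    rcases hcase with h | h
    · exact Or.inl h
    · right
      obtain ⟨ρ, hρG, T, hT⟩ := rho_of_klim hf hk0 hks0 hks hklim h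
      refine ⟨ρ, hρG, T, fun i hi => ?_⟩
      calc ρ ≤ f' (kstar i) := hT i hi
        _ ≤ f' (k' i) := f'_anti_le hf (he'.1 i) (k_le_kstar hf hs hk0 he' hks0 hks i)
  -- our equilibrium is bubbleless
  obtain ⟨kbar, hkb1, hkbpos, hkb⟩ := exists_kbar hf hs hk0
  have hkle := equil_k_le hf hs he hkb1 hkb
  have hple := equil_p_lt hf hs he hkbpos hkle
  have hbeta : p 0 = ∑' i, Gam G f' k (i+1) * d (i+1) := by
    rcases hD k p he with h | ⟨ρ, hρG, T, hT⟩
    · exact beta_zero_of_div hf he.1 he.2.1 he.2.2.2.2 hd (w_pos hf hkbpos) hple h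
    · exact beta_zero_of_rho hf he.1 he.2.1 he.2.2.2.2 hd hple
        (Gam_tendsto_zero hf he.1 hρG hT)
  have hbub := bubbleless_of_beta_zero hf he.1 he.2.1 he.2.2.2.2 hd hbeta
  refine ⟨k, p, ⟨he, hbub⟩, ?_⟩
  intro k' p' he'
  have hp0 : p' 0 = p 0 := by
    rcases lt_trichotomy (p' 0) (p 0) with h | h | h
    · exact absurd (no_lt hf hs hk0 hd he' he (hD k' p' he') h) not_false
    · exact h
    · exact absurd (no_lt hf hs hk0 hd he he' (hD k p he) h) not_false
  have hdet := equil_deterministic hf hs he' he hp0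
  exact ⟨fun t => (hdet t).1, fun t => (hdet t).2⟩

end
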